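/- The function I(x,y) = r⁶ / (1 − 3r² − 4x³ − 3xy² − 3y³ − 3r³ arctan r)², with r² = x² + y², is a first integral of the system ẋ = −y + x(y³ − 3xy² + 2x²y)(1 + x² + y²), ẏ = x + y(y³ − 3xy² + 2x²y)(1 + x² + y²): its derivative along the vector field vanishes wherever I is defined. -/

import Mathlib

open Real

set_option maxHeartbeats 1600000
set_option maxRecDepth 4000

/-- `I(x,y) = r⁶ / (1 − 3r² − 4x³ − 3xy² − 3y³ − 3r³ arctan r)²` is a first
integral of system (9): its derivative along the vector field vanishes
wherever it is defined. -/
theorem stmt10 (Qf P₁ P₂ D I : ℝ → ℝ → ℝ)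
    (hQ : ∀ x y, Qf x y = y ^ 3 - 3 * x * y ^ 2 + 2 * x ^ 2 * y)
    (hP₁ : ∀ x y, P₁ x y = -y + x * Qf x y * (1 + x ^ 2 + y ^ 2))
    (hP₂ : ∀ x y, P₂ x y = x + y * Qf x y * (1 + x ^ 2 + y ^ 2))
    (hD : ∀ x y, D x y = 1 - 3 * (x ^ 2 + y ^ 2) - 4 * x ^ 3 - 3 * x * y ^ 2
      - 3 * y ^ 3 - 3 * (Real.sqrt (x ^ 2 + y ^ 2)) ^ 3
        * Real.arctan (Real.sqrt (x ^ 2 + y ^ 2)))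
    (hI : ∀ x y, I x y = (Real.sqrt (x ^ 2 + y ^ 2)) ^ 6 / (D x y) ^ 2) :
    ∀ x y : ℝ, D x y ≠ 0 →
      P₁ x y * deriv (fun x' => I x' y) x + P₂ x y * deriv (fun y' => I x y') y = 0 := by
  intro x y hDxy
  rcases eq_or_ne (x ^ 2 + y ^ 2) 0 with h0 | hne
  · have hx : x = 0 := by nlinarith [sq_nonneg x, sq_nonneg y]
    have hy : y = 0 := by nlinarith [sq_nonneg x, sq_nonneg y]
    simp [hP₁, hP₂, hQ, hx, hy]
  · have hupos : 0 < x ^ 2 + y ^ 2 := lt_of_le_of_ne (by positivity) (Ne.symm hne)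
    have hrpos : 0 < Real.sqrt (x ^ 2 + y ^ 2) := Real.sqrt_pos.mpr hupos
    have hr2 : Real.sqrt (x ^ 2 + y ^ 2) ^ 2 = x ^ 2 + y ^ 2 := Real.sq_sqrt hupos.le
    -- the explicit (sqrt-free numerator) form of I along each axis direction
    have hIxfun : (fun x' => I x' y) = fun x' => (x' ^ 2 + y ^ 2) ^ 3 /
        (1 - 3 * (x' ^ 2 + y ^ 2) - 4 * x' ^ 3 - 3 * x' * y ^ 2 - 3 * y ^ 3
          - 3 * ((x' ^ 2 + y ^ 2) * Real.sqrt (x' ^ 2 + y ^ 2))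
            * Real.arctan (Real.sqrt (x' ^ 2 + y ^ 2))) ^ 2 := by
      funext x'
      have hu' : (0 : ℝ) ≤ x' ^ 2 + y ^ 2 := by positivity
      rw [hI, hD, show (6 : ℕ) = 2 * 3 from rfl, pow_mul, Real.sq_sqrt hu',
        pow_succ (Real.sqrt (x' ^ 2 + y ^ 2)) 2, Real.sq_sqrt hu']
    have hIyfun : (fun y' => I x y') = fun y' => (x ^ 2 + y' ^ 2) ^ 3 /
        (1 - 3 * (x ^ 2 + y' ^ 2) - 4 * x ^ 3 - 3 * x * y' ^ 2 - 3 * y' ^ 3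
          - 3 * ((x ^ 2 + y' ^ 2) * Real.sqrt (x ^ 2 + y' ^ 2))
            * Real.arctan (Real.sqrt (x ^ 2 + y' ^ 2))) ^ 2 := by
      funext y'
      have hu' : (0 : ℝ) ≤ x ^ 2 + y' ^ 2 := by positivity
      rw [hI, hD, show (6 : ℕ) = 2 * 3 from rfl, pow_mul, Real.sq_sqrt hu',
        pow_succ (Real.sqrt (x ^ 2 + y' ^ 2)) 2, Real.sq_sqrt hu']
    -- the value of D at (x,y) with the cube of the square root unfolded
    have hDval : D x y = 1 - 3 * (x ^ 2 + y ^ 2) - 4 * x ^ 3 - 3 * x * y ^ 2 - 3 * y ^ 3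
        - 3 * ((x ^ 2 + y ^ 2) * Real.sqrt (x ^ 2 + y ^ 2))
          * Real.arctan (Real.sqrt (x ^ 2 + y ^ 2)) := by
      rw [hD, pow_succ (Real.sqrt (x ^ 2 + y ^ 2)) 2, Real.sq_sqrt hupos.le]
    have hEne : (1 - 3 * (x ^ 2 + y ^ 2) - 4 * x ^ 3 - 3 * x * y ^ 2 - 3 * y ^ 3
        - 3 * ((x ^ 2 + y ^ 2) * Real.sqrt (x ^ 2 + y ^ 2))
          * Real.arctan (Real.sqrt (x ^ 2 + y ^ 2))) ≠ 0 := hDval ▸ hDxy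
    have hEne2 : (1 - 3 * (x ^ 2 + y ^ 2) - 4 * x ^ 3 - 3 * x * y ^ 2 - 3 * y ^ 3
        - 3 * ((x ^ 2 + y ^ 2) * Real.sqrt (x ^ 2 + y ^ 2))
          * Real.arctan (Real.sqrt (x ^ 2 + y ^ 2))) ^ 2 ≠ 0 := pow_ne_zero 2 hEne
    -- derivatives of the basic pieces, x direction
    have hx2 : HasDerivAt (fun x' : ℝ => x' ^ 2) (2 * x) x := by
      simpa using hasDerivAt_pow 2 x
    have hx3 : HasDerivAt (fun x' : ℝ => x' ^ 3) (3 * x ^ 2) x := by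
      simpa using hasDerivAt_pow 3 x
    have hu' : HasDerivAt (fun x' : ℝ => x' ^ 2 + y ^ 2) (2 * x) x := hx2.add_const _
    have hsq : HasDerivAt (fun x' : ℝ => Real.sqrt (x' ^ 2 + y ^ 2))
        (1 / (2 * Real.sqrt (x ^ 2 + y ^ 2)) * (2 * x)) x :=
      (Real.hasDerivAt_sqrt hne).comp x hu'
    have hat : HasDerivAt (fun x' : ℝ => Real.arctan (Real.sqrt (x' ^ 2 + y ^ 2)))
        (1 / (1 + Real.sqrt (x ^ 2 + y ^ 2) ^ 2) * (1 / (2 * Real.sqrt (x ^ 2 + y ^ 2))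
          * (2 * x))) x :=
      (Real.hasDerivAt_arctan _).comp x hsq
    have hF : HasDerivAt (fun x' : ℝ => (x' ^ 2 + y ^ 2) ^ 3)
        ((3 : ℕ) * (x ^ 2 + y ^ 2) ^ 2 * (2 * x)) x := hu'.pow 3
    have hG : HasDerivAt (fun x' : ℝ => 1 - 3 * (x' ^ 2 + y ^ 2) - 4 * x' ^ 3 - 3 * x' * y ^ 2
        - 3 * y ^ 3 - 3 * ((x' ^ 2 + y ^ 2) * Real.sqrt (x' ^ 2 + y ^ 2))
          * Real.arctan (Real.sqrt (x' ^ 2 + y ^ 2)))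
        (0 - 3 * (2 * x) - 4 * (3 * x ^ 2) - 3 * 1 * y ^ 2
          - (3 * (2 * x * Real.sqrt (x ^ 2 + y ^ 2) + (x ^ 2 + y ^ 2)
              * (1 / (2 * Real.sqrt (x ^ 2 + y ^ 2)) * (2 * x)))
                * Real.arctan (Real.sqrt (x ^ 2 + y ^ 2))
            + 3 * ((x ^ 2 + y ^ 2) * Real.sqrt (x ^ 2 + y ^ 2))
              * (1 / (1 + Real.sqrt (x ^ 2 + y ^ 2) ^ 2)
                * (1 / (2 * Real.sqrt (x ^ 2 + y ^ 2)) * (2 * x))))) x :=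
      ((((hasDerivAt_const x (1 : ℝ)).sub (hu'.const_mul 3)).sub
        (hx3.const_mul 4)).sub (((hasDerivAt_id x).const_mul 3).mul_const (y ^ 2))).sub_const
          (3 * y ^ 3) |>.sub (((hu'.mul hsq).const_mul 3).mul hat)
    -- derivatives of the basic pieces, y direction
    have hy2 : HasDerivAt (fun y' : ℝ => y' ^ 2) (2 * y) y := by
      simpa using hasDerivAt_pow 2 y
    have hy3 : HasDerivAt (fun y' : ℝ => y' ^ 3) (3 * y ^ 2) y := by
      simpa using hasDerivAt_pow 3 y
    have hv' : HasDerivAt (fun y' : ℝ => x ^ 2 + y' ^ 2) (2 * y) y := hy2.const_add _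
    have hsqy : HasDerivAt (fun y' : ℝ => Real.sqrt (x ^ 2 + y' ^ 2))
        (1 / (2 * Real.sqrt (x ^ 2 + y ^ 2)) * (2 * y)) y :=
      (Real.hasDerivAt_sqrt hne).comp y hv'
    have haty : HasDerivAt (fun y' : ℝ => Real.arctan (Real.sqrt (x ^ 2 + y' ^ 2)))
        (1 / (1 + Real.sqrt (x ^ 2 + y ^ 2) ^ 2) * (1 / (2 * Real.sqrt (x ^ 2 + y ^ 2))
          * (2 * y))) y :=
      (Real.hasDerivAt_arctan _).comp y hsqy
    have hFy : HasDerivAt (fun y' : ℝ => (x ^ 2 + y' ^ 2) ^ 3)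
        ((3 : ℕ) * (x ^ 2 + y ^ 2) ^ 2 * (2 * y)) y := hv'.pow 3
    have hGy : HasDerivAt (fun y' : ℝ => 1 - 3 * (x ^ 2 + y' ^ 2) - 4 * x ^ 3 - 3 * x * y' ^ 2
        - 3 * y' ^ 3 - 3 * ((x ^ 2 + y' ^ 2) * Real.sqrt (x ^ 2 + y' ^ 2))
          * Real.arctan (Real.sqrt (x ^ 2 + y' ^ 2)))
        (0 - 3 * (2 * y) - 3 * x * (2 * y) - 3 * (3 * y ^ 2)
          - (3 * (2 * y * Real.sqrt (x ^ 2 + y ^ 2) + (x ^ 2 + y ^ 2)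
              * (1 / (2 * Real.sqrt (x ^ 2 + y ^ 2)) * (2 * y)))
                * Real.arctan (Real.sqrt (x ^ 2 + y ^ 2))
            + 3 * ((x ^ 2 + y ^ 2) * Real.sqrt (x ^ 2 + y ^ 2))
              * (1 / (1 + Real.sqrt (x ^ 2 + y ^ 2) ^ 2)
                * (1 / (2 * Real.sqrt (x ^ 2 + y ^ 2)) * (2 * y))))) y :=
      (((((hasDerivAt_const y (1 : ℝ)).sub (hv'.const_mul 3)).sub_const
        (4 * x ^ 3)).sub (hy2.const_mul (3 * x))).sub (hy3.const_mul 3)).sub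
          (((hv'.mul hsqy).const_mul 3).mul haty)
    -- simplify the derivative of the denominator (generic in r with r² = x²+y²)
    have key2x : ∀ r : ℝ, 0 < r → r ^ 2 = x ^ 2 + y ^ 2 →
        (0 - 3 * (2 * x) - 4 * (3 * x ^ 2) - 3 * 1 * y ^ 2
          - (3 * (2 * x * r + (x ^ 2 + y ^ 2) * (1 / (2 * r) * (2 * x))) * Real.arctan r
            + 3 * ((x ^ 2 + y ^ 2) * r) * (1 / (1 + r ^ 2) * (1 / (2 * r) * (2 * x)))))
        = -6 * x - 12 * x ^ 2 - 3 * y ^ 2 - 9 * x * r * Real.arctan r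
          - 3 * x * (x ^ 2 + y ^ 2) / (1 + (x ^ 2 + y ^ 2)) := by
      intro r hr h2
      have h1r : (1 : ℝ) + r ^ 2 ≠ 0 := by positivity
      rw [← h2]
      field_simp
      ring
    have key2y : ∀ r : ℝ, 0 < r → r ^ 2 = x ^ 2 + y ^ 2 →
        (0 - 3 * (2 * y) - 3 * x * (2 * y) - 3 * (3 * y ^ 2)
          - (3 * (2 * y * r + (x ^ 2 + y ^ 2) * (1 / (2 * r) * (2 * y))) * Real.arctan r
            + 3 * ((x ^ 2 + y ^ 2) * r) * (1 / (1 + r ^ 2) * (1 / (2 * r) * (2 * y)))))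
        = -6 * y - 6 * x * y - 9 * y ^ 2 - 9 * y * r * Real.arctan r
          - 3 * y * (x ^ 2 + y ^ 2) / (1 + (x ^ 2 + y ^ 2)) := by
      intro r hr h2
      have h1r : (1 : ℝ) + r ^ 2 ≠ 0 := by positivity
      rw [← h2]
      field_simp
      ring
    rw [key2x _ hrpos hr2] at hG
    rw [key2y _ hrpos hr2] at hGy
    have hIx := (hF.div (hG.pow 2) hEne2).deriv
    simp only [Pi.div_def, Pi.pow_apply] at hIx
    have hIy := (hFy.div (hGy.pow 2) hEne2).deriv
    simp only [Pi.div_def, Pi.pow_apply] at hIy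
    obtain ⟨E, hE_def⟩ : ∃ E : ℝ, E = 1 - 3 * (x ^ 2 + y ^ 2) - 4 * x ^ 3 - 3 * x * y ^ 2
        - 3 * y ^ 3 - 3 * ((x ^ 2 + y ^ 2) * Real.sqrt (x ^ 2 + y ^ 2))
          * Real.arctan (Real.sqrt (x ^ 2 + y ^ 2)) := ⟨_, rfl⟩
    obtain ⟨s, hs_def⟩ : ∃ s : ℝ, s = Real.sqrt (x ^ 2 + y ^ 2) := ⟨_, rfl⟩
    rw [hIxfun, hIyfun, hIx, hIy, hP₁, hP₂, hQ, ← hE_def, ← hs_def]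
    have hE' : E = 1 - 3 * (x ^ 2 + y ^ 2) - 4 * x ^ 3 - 3 * x * y ^ 2 - 3 * y ^ 3
        - 3 * ((x ^ 2 + y ^ 2) * s) * Real.arctan s := by rw [hs_def]; exact hE_def
    have hEne' : E ≠ 0 := by rw [hE_def]; exact hEne
    have hW : (1 : ℝ) + (x ^ 2 + y ^ 2) ≠ 0 := by positivity
    field_simp
    linear_combination (6 * y ^ 9 * E + 12 * y ^ 11 * E + 6 * y ^ 13 * E + (-18) * x * y ^ 8 * E + (-36) * x * y ^
        10 * E + (-18) * x * y ^ 12 * E + 30 * x ^ 2 * y ^ 7 * E + 72 * x ^ 2 * y ^ 9 * E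
        + 42 * x ^ 2 * y ^ 11 * E + (-54) * x ^ 3 * y ^ 6 * E + (-144) * x ^ 3 * y ^ 8 * E
        + (-90) * x ^ 3 * y ^ 10 * E + 54 * x ^ 4 * y ^ 5 * E + 168 * x ^ 4 * y ^ 7 * E +
        120 * x ^ 4 * y ^ 9 * E + (-54) * x ^ 5 * y ^ 4 * E + (-216) * x ^ 5 * y ^ 6 * E +
        (-180) * x ^ 5 * y ^ 8 * E + 42 * x ^ 6 * y ^ 3 * E + 192 * x ^ 6 * y ^ 5 * E +
        180 * x ^ 6 * y ^ 7 * E + (-18) * x ^ 7 * y ^ 2 * E + (-144) * x ^ 7 * y ^ 4 * E +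
        (-180) * x ^ 7 * y ^ 6 * E + 12 * x ^ 8 * y * E + 108 * x ^ 8 * y ^ 3 * E + 150 *
        x ^ 8 * y ^ 5 * E + (-36) * x ^ 9 * y ^ 2 * E + (-90) * x ^ 9 * y ^ 4 * E + 24 * x
        ^ 10 * y * E + 66 * x ^ 10 * y ^ 3 * E + (-18) * x ^ 11 * y ^ 2 * E + 12 * x ^ 12
        * y * E) * hE'
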